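/- arXiv:0908.0506 — 2 statements merged into one kernel-verified Lean document; each statement's English description precedes it below -/
import Mathlib

section
/- Let r* minimize ||J* − Φr||_∞ over r ∈ ℝ^K and define U_SALP(θ) = ||J* − Φr*||_∞ + ℓ(r*,θ) + 2θ/(1−α). Then U_SALP(0) ≤ (2/(1−α)) ||J* − Φr*||_∞. -/
open Finset Matrix

noncomputable section

/-- The Bellman operator. -/
def bellmanT {X A : Type*} [Fintype X] [Fintype A] [Nonempty A]
    (g : X → A → ℝ) (P : A → X → X → ℝ) (α : ℝ) (J : X → ℝ) : X → ℝ :=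
  fun x => Finset.univ.inf' Finset.univ_nonempty fun a => g x a + α * ∑ x', P a x x' * J x'

/-- The Bellman operator of a stationary policy. -/
def polT {X A : Type*} [Fintype X]
    (g : X → A → ℝ) (P : A → X → X → ℝ) (α : ℝ) (μ : X → A) (J : X → ℝ) : X → ℝ :=
  fun x => g x (μ x) + α * ∑ x', P (μ x) x x' * J x'

/-- Transition matrix of a stationary policy. -/
def polMat {X A : Type*} (P : A → X → X → ℝ) (μ : X → A) : Matrix X X ℝ :=
  Matrix.of fun x x' => P (μ x) x x'

/-- Δ_μ = Σ_k (α P_μ)^k = (I - α P_μ)⁻¹. -/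
def deltaMat {X A : Type*} [Fintype X] [DecidableEq X]
    (P : A → X → X → ℝ) (α : ℝ) (μ : X → A) : Matrix X X ℝ :=
  ∑' k : ℕ, (α • polMat P μ) ^ k

/-- π_{μ,ν} = (1-α) ν^⊤ (I - α P_μ)⁻¹. -/
def piDist {X A : Type*} [Fintype X] [DecidableEq X]
    (P : A → X → X → ℝ) (α : ℝ) (μ : X → A) (ν : X → ℝ) : X → ℝ :=
  fun x => (1 - α) * ∑ x0, ν x0 * deltaMat P α μ x0 x

/-- Cost-to-go of policy μ: Σ_t α^t P_μ^t g_μ. -/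
def Jpol {X A : Type*} [Fintype X] [DecidableEq X]
    (g : X → A → ℝ) (P : A → X → X → ℝ) (α : ℝ) (μ : X → A) : X → ℝ :=
  fun x => ∑' t : ℕ, α ^ t * (((polMat P μ) ^ t) *ᵥ (fun y => g y (μ y))) x

/-- Linear combination of basis functions. -/
def phiR {X : Type*} {K : ℕ} (Φ : X → Fin K → ℝ) (r : Fin K → ℝ) : X → ℝ :=
  fun x => ∑ i, Φ x i * r i

/-- ν-weighted 1-norm. -/
def wnorm1 {X : Type*} [Fintype X] (ν J : X → ℝ) : ℝ := ∑ x, ν x * |J x|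

/-- Max norm. -/
def supNorm {X : Type*} [Fintype X] [Nonempty X] (J : X → ℝ) : ℝ :=
  Finset.univ.sup' Finset.univ_nonempty fun x => |J x|

/-- ψ-weighted max norm ‖J‖_{∞,1/ψ}. -/
def wsupNorm {X : Type*} [Fintype X] [Nonempty X] (ψ J : X → ℝ) : ℝ :=
  Finset.univ.sup' Finset.univ_nonempty fun x => |J x| / ψ x

/-- β(ψ) = max_{x,a} (Σ_{x'} P_a(x,x') ψ(x')) / ψ(x). -/
def betaPsi {X A : Type*} [Fintype X] [Nonempty X] [Fintype A] [Nonempty A]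
    (P : A → X → X → ℝ) (ψ : X → ℝ) : ℝ :=
  Finset.univ.sup' Finset.univ_nonempty fun p : X × A => (∑ x', P p.2 p.1 x' * ψ x') / ψ p.1

/-- Feasible values of the LP defining ℓ(r,θ). -/
def ellSet {X A : Type*} [Fintype X] [Fintype A] [Nonempty A] {K : ℕ}
    (g : X → A → ℝ) (P : A → X → X → ℝ) (α : ℝ) (π : X → ℝ)
    (Φ : X → Fin K → ℝ) (r : Fin K → ℝ) (θ : ℝ) : Set ℝ :=
  {v | ∃ (s : X → ℝ) (γ : ℝ), v = γ / (1 - α) ∧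
    (∀ x, phiR Φ r x - bellmanT g P α (phiR Φ r) x ≤ s x + γ) ∧
    (∑ x, π x * s x ≤ θ) ∧ (∀ x, 0 ≤ s x)}

/-- ℓ(r,θ): optimal value of the LP (3.2). -/
def ellVal {X A : Type*} [Fintype X] [Fintype A] [Nonempty A] {K : ℕ}
    (g : X → A → ℝ) (P : A → X → X → ℝ) (α : ℝ) (π : X → ℝ)
    (Φ : X → Fin K → ℝ) (r : Fin K → ℝ) (θ : ℝ) : ℝ :=
  sInf (ellSet g P α π Φ r θ)

section aux
variable {X A : Type*} [Fintype X] [DecidableEq X]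
  (P : A → X → X → ℝ) (μ : X → A)
lemma Ppow_nonneg (hP0 : ∀ a x x', 0 ≤ P a x x') :
    ∀ (k : ℕ) (x y : X), 0 ≤ ((polMat P μ) ^ k) x y := by
  intro k
  induction k with
  | zero => intro x y; rw [pow_zero, Matrix.one_apply]; split <;> norm_num
  | succ k ih =>
    intro x y
    rw [pow_succ, Matrix.mul_apply]
    exact Finset.sum_nonneg fun z _ => mul_nonneg (ih x z) (hP0 _ _ _)
lemma Ppow_rowsum (hP1 : ∀ a x, ∑ x', P a x x' = 1) :
    ∀ (k : ℕ) (x : X), ∑ y, ((polMat P μ) ^ k) x y = 1 := by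
  intro k
  induction k with
  | zero => intro x; simp [Matrix.one_apply]
  | succ k ih =>
    intro x
    simp only [pow_succ, Matrix.mul_apply]
    rw [Finset.sum_comm]
    have : ∀ z ∈ Finset.univ, ∑ y : X, (polMat P μ ^ k) x z * (polMat P μ) z y
        = (polMat P μ ^ k) x z := by
      intro z _
      rw [← Finset.mul_sum]
      have : ∑ y, (polMat P μ) z y = 1 := hP1 (μ z) z
      rw [this, mul_one]
    rw [Finset.sum_congr rfl this, ih]
variable (α : ℝ)
lemma ent_eq (k : ℕ) (x y : X) :
    ((α • polMat P μ) ^ k) x y = α ^ k * ((polMat P μ) ^ k) x y := by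
  rw [smul_pow, Matrix.smul_apply, smul_eq_mul]
lemma ent_summable (hα0 : 0 < α) (hα1 : α < 1)
    (hP0 : ∀ a x x', 0 ≤ P a x x') (hP1 : ∀ a x, ∑ x', P a x x' = 1) (x y : X) :
    Summable fun k : ℕ => ((α • polMat P μ) ^ k) x y := by
  apply Summable.of_nonneg_of_le
    (fun k => by rw [ent_eq]; exact mul_nonneg (pow_nonneg hα0.le _) (Ppow_nonneg P μ hP0 k x y))
    (fun k => ?_) (summable_geometric_of_lt_one hα0.le hα1)
  rw [ent_eq]
  have h1 : ((polMat P μ) ^ k) x y ≤ 1 := by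
    calc ((polMat P μ) ^ k) x y ≤ ∑ z, ((polMat P μ) ^ k) x z :=
      Finset.single_le_sum (fun z _ => Ppow_nonneg P μ hP0 k x z) (Finset.mem_univ y)
    _ = 1 := Ppow_rowsum P μ hP1 k x
  nlinarith [pow_nonneg hα0.le k]
lemma delta_apply (hα0 : 0 < α) (hα1 : α < 1)
    (hP0 : ∀ a x x', 0 ≤ P a x x') (hP1 : ∀ a x, ∑ x', P a x x' = 1) (x y : X) :
    deltaMat P α μ x y = ∑' k : ℕ, α ^ k * ((polMat P μ) ^ k) x y := by
  unfold deltaMat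
  have hs : Summable fun k : ℕ => ((α • polMat P μ) ^ k : Matrix X X ℝ) :=
    Pi.summable.mpr fun x => Pi.summable.mpr fun y => ent_summable P μ α hα0 hα1 hP0 hP1 x y
  erw [tsum_apply hs, tsum_apply (Pi.summable.mp hs x)]
  exact tsum_congr fun k => ent_eq P μ α k x y

lemma delta_nonneg (hα0 : 0 < α) (hα1 : α < 1)
    (hP0 : ∀ a x x', 0 ≤ P a x x') (hP1 : ∀ a x, ∑ x', P a x x' = 1) (x y : X) :
    0 ≤ deltaMat P α μ x y := by
  rw [delta_apply P μ α hα0 hα1 hP0 hP1]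
  exact tsum_nonneg fun k => mul_nonneg (pow_nonneg hα0.le _) (Ppow_nonneg P μ hP0 k x y)

lemma delta_rowsum (hα0 : 0 < α) (hα1 : α < 1)
    (hP0 : ∀ a x x', 0 ≤ P a x x') (hP1 : ∀ a x, ∑ x', P a x x' = 1) (x : X) :
    ∑ y, deltaMat P α μ x y = (1 - α)⁻¹ := by
  have hsum : ∀ y ∈ Finset.univ, Summable fun k : ℕ => α ^ k * ((polMat P μ) ^ k) x y := by
    intro y _
    have := ent_summable P μ α hα0 hα1 hP0 hP1 x y
    simpa only [ent_eq] using this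
  calc ∑ y, deltaMat P α μ x y
      = ∑ y, ∑' k : ℕ, α ^ k * ((polMat P μ) ^ k) x y := by
        exact Finset.sum_congr rfl fun y _ => delta_apply P μ α hα0 hα1 hP0 hP1 x y
    _ = ∑' k : ℕ, ∑ y, α ^ k * ((polMat P μ) ^ k) x y := (Summable.tsum_finsetSum hsum).symm
    _ = ∑' k : ℕ, α ^ k := by
        refine tsum_congr fun k => ?_
        rw [← Finset.mul_sum, Ppow_rowsum P μ hP1 k x, mul_one]
    _ = (1 - α)⁻¹ := tsum_geometric_of_lt_one hα0.le hα1
end aux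

section pi
variable {X A : Type*} [Fintype X] [Nonempty X] [DecidableEq X]
  (P : A → X → X → ℝ) (μ : X → A) (α : ℝ)

lemma piDist_nonneg (hα0 : 0 < α) (hα1 : α < 1)
    (hP0 : ∀ a x x', 0 ≤ P a x x') (hP1 : ∀ a x, ∑ x', P a x x' = 1)
    (ν : X → ℝ) (hν0 : ∀ x, 0 ≤ ν x) (x : X) : 0 ≤ piDist P α μ ν x := by
  unfold piDist
  refine mul_nonneg (by linarith) (Finset.sum_nonneg fun x0 _ =>
    mul_nonneg (hν0 x0) (delta_nonneg P μ α hα0 hα1 hP0 hP1 x0 x))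

lemma piDist_sum (hα0 : 0 < α) (hα1 : α < 1)
    (hP0 : ∀ a x x', 0 ≤ P a x x') (hP1 : ∀ a x, ∑ x', P a x x' = 1)
    (ν : X → ℝ) (hν1 : ∑ x, ν x = 1) : ∑ x, piDist P α μ ν x = 1 := by
  unfold piDist
  rw [← Finset.mul_sum, Finset.sum_comm]
  have : ∀ x0 ∈ Finset.univ, ∑ x, ν x0 * deltaMat P α μ x0 x = ν x0 * (1 - α)⁻¹ := by
    intro x0 _
    rw [← Finset.mul_sum, delta_rowsum P μ α hα0 hα1 hP0 hP1 x0]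
  rw [Finset.sum_congr rfl this, ← Finset.sum_mul, hν1, one_mul,
    mul_inv_cancel₀ (by linarith : (1:ℝ) - α ≠ 0)]

lemma piDist_exists_pos (hα0 : 0 < α) (hα1 : α < 1)
    (hP0 : ∀ a x x', 0 ≤ P a x x') (hP1 : ∀ a x, ∑ x', P a x x' = 1)
    (ν : X → ℝ) (hν0 : ∀ x, 0 ≤ ν x) (hν1 : ∑ x, ν x = 1) :
    ∃ x, 0 < piDist P α μ ν x := by
  by_contra h
  push_neg at h
  have : ∑ x, piDist P α μ ν x = 0 := le_antisymm (Finset.sum_nonpos fun x _ => h x)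
    (Finset.sum_nonneg fun x _ => piDist_nonneg P μ α hα0 hα1 hP0 hP1 ν hν0 x)
  rw [piDist_sum P μ α hα0 hα1 hP0 hP1 ν hν1] at this
  norm_num at this
end pi

lemma bellman_contract {X A : Type*} [Fintype X] [Fintype A] [Nonempty A]
    (g : X → A → ℝ) (P : A → X → X → ℝ) (α : ℝ) (hα0 : 0 ≤ α)
    (hP0 : ∀ a x x', 0 ≤ P a x x') (hP1 : ∀ a x, ∑ x', P a x x' = 1)
    (J J' : X → ℝ) (c : ℝ) (h : ∀ y, J y - J' y ≤ c) (x : X) :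
    bellmanT g P α J x ≤ bellmanT g P α J' x + α * c := by
  unfold bellmanT
  obtain ⟨a0, -, ha0⟩ := Finset.exists_mem_eq_inf' (Finset.univ_nonempty (α := A))
    (fun a => g x a + α * ∑ x', P a x x' * J' x')
  rw [ha0]
  have key : ∑ x', P a0 x x' * J x' ≤ (∑ x', P a0 x x' * J' x') + c := by
    have h2 : ∑ x', P a0 x x' * J x' ≤ ∑ x', (P a0 x x' * J' x' + P a0 x x' * c) :=
      Finset.sum_le_sum fun y _ => by nlinarith [hP0 a0 x y, h y]
    calc ∑ x', P a0 x x' * J x' ≤ ∑ x', (P a0 x x' * J' x' + P a0 x x' * c) := h2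
      _ = (∑ x', P a0 x x' * J' x') + (∑ x', P a0 x x') * c := by
          rw [Finset.sum_add_distrib, Finset.sum_mul]
      _ = (∑ x', P a0 x x' * J' x') + c := by rw [hP1 a0 x, one_mul]
  calc Finset.univ.inf' Finset.univ_nonempty (fun a => g x a + α * ∑ x', P a x x' * J x')
      ≤ g x a0 + α * ∑ x', P a0 x x' * J x' := Finset.inf'_le _ (Finset.mem_univ a0)
    _ ≤ g x a0 + α * ∑ x', P a0 x x' * J' x' + α * c := by nlinarith

/-- Corollary 1(i): U_SALP(0) ≤ (2/(1-α)) ‖J* - Φr*‖_∞, where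
U_SALP(θ) = ‖J* - Φr*‖_∞ + ℓ(r*,θ) + 2θ/(1-α). -/
theorem U_SALP_at_zero_bound
    {X A : Type*} [Fintype X] [Nonempty X] [Fintype A] [Nonempty A] [DecidableEq X] {K : ℕ}
    (g : X → A → ℝ) (P : A → X → X → ℝ) (α : ℝ)
    (hα0 : 0 < α) (hα1 : α < 1)
    (hP0 : ∀ a x x', 0 ≤ P a x x') (hP1 : ∀ a x, ∑ x', P a x x' = 1)
    (Jstar : X → ℝ) (hJstar : bellmanT g P α Jstar = Jstar)
    (μs : X → A) (hμs : polT g P α μs Jstar = bellmanT g P α Jstar)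
    (ν : X → ℝ) (hν0 : ∀ x, 0 ≤ ν x) (hν1 : ∑ x, ν x = 1)
    (Φ : X → Fin K → ℝ)
    (rstar : Fin K → ℝ)
    (hrstar : ∀ r : Fin K → ℝ,
      supNorm (fun x => Jstar x - phiR Φ rstar x) ≤ supNorm (fun x => Jstar x - phiR Φ r x))
    (U : ℝ → ℝ)
    (hU : ∀ θ, U θ = supNorm (fun x => Jstar x - phiR Φ rstar x) +
      ellVal g P α (piDist P α μs ν) Φ rstar θ + 2 * θ / (1 - α)) :
    U 0 ≤ (2 / (1 - α)) * supNorm (fun x => Jstar x - phiR Φ rstar x) := by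
  have h1α : (0:ℝ) < 1 - α := by linarith
  set ε := supNorm (fun x => Jstar x - phiR Φ rstar x) with hε
  set π := piDist P α μs ν with hπ
  -- pointwise bounds from the sup norm
  have habs : ∀ x, |Jstar x - phiR Φ rstar x| ≤ ε := fun x =>
    Finset.le_sup' (fun x => |Jstar x - phiR Φ rstar x|) (Finset.mem_univ x)
  -- the bellman residual bound
  have hD : ∀ x, phiR Φ rstar x - bellmanT g P α (phiR Φ rstar) x ≤ (1 + α) * ε := by
    intro x
    have h1 : phiR Φ rstar x - Jstar x ≤ ε := by
      have := habs x; rw [abs_le] at this; linarith [this.1]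
    have h2 : bellmanT g P α Jstar x ≤ bellmanT g P α (phiR Φ rstar) x + α * ε := by
      refine bellman_contract g P α hα0.le hP0 hP1 Jstar (phiR Φ rstar) ε (fun y => ?_) x
      have := habs y; rw [abs_le] at this; linarith [this.2]
    have h3 : bellmanT g P α Jstar x = Jstar x := by rw [hJstar]
    linarith
  -- feasibility of (s = 0, γ = (1+α)ε)
  have hmem : ((1 + α) * ε) / (1 - α) ∈ ellSet g P α π Φ rstar 0 := by
    refine ⟨fun _ => 0, (1 + α) * ε, rfl, fun x => by simpa using hD x, by simp, fun x => le_refl 0⟩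
  -- bounded below
  obtain ⟨xp, hxp⟩ := piDist_exists_pos P μs α hα0 hα1 hP0 hP1 ν hν0 hν1
  have hbdd : BddBelow (ellSet g P α π Φ rstar 0) := by
    refine ⟨(phiR Φ rstar xp - bellmanT g P α (phiR Φ rstar) xp) / (1 - α), ?_⟩
    rintro v ⟨s, γ, rfl, hfeas, hsum, hs0⟩
    have hterm : ∀ x ∈ Finset.univ, 0 ≤ π x * s x := fun x _ =>
      mul_nonneg (piDist_nonneg P μs α hα0 hα1 hP0 hP1 ν hν0 x) (hs0 x)
    have hzero : ∑ x, π x * s x = 0 := le_antisymm hsum (Finset.sum_nonneg hterm)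
    have hsxp : s xp = 0 := by
      have := (Finset.sum_eq_zero_iff_of_nonneg hterm).mp hzero xp (Finset.mem_univ xp)
      have hπxp := hxp
      nlinarith
    have hγ : phiR Φ rstar xp - bellmanT g P α (phiR Φ rstar) xp ≤ γ := by
      have := hfeas xp; rw [hsxp] at this; linarith
    exact div_le_div_of_nonneg_right hγ h1α.le
  have hell : ellVal g P α π Φ rstar 0 ≤ ((1 + α) * ε) / (1 - α) := csInf_le hbdd hmem
  rw [hU 0]
  have : 2 * (0:ℝ) / (1 - α) = 0 := by ring
  rw [this, add_zero]
  have hgoal : ε + ((1 + α) * ε) / (1 - α) = (2 / (1 - α)) * ε := by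
    field_simp
    ring
  linarith [hell]
end
end

section
/- If r_SALP is an optimal solution to the SALP in penalized form, then ||J* − Φ r_SALP||_{1,ν} ≤ inf_{r∈ℝ^K, ψ∈Ψ} ||J* − Φr||_{∞,1/ψ} · ( ν^⊤ψ + 2(π_{μ*,ν}^⊤ψ + 1)(αβ(ψ) + 1)/(1−α) ). -/
open Finset Matrix

noncomputable section

set_option linter.unusedSectionVars false
set_option maxHeartbeats 1000000

section SALPHelpers

variable {X : Type*} [Fintype X] [DecidableEq X]

lemma stoch_pow (Q : Matrix X X ℝ) (h0 : ∀ x y, 0 ≤ Q x y) (h1 : ∀ x, ∑ y, Q x y = 1) :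
    ∀ k : ℕ, (∀ x y, 0 ≤ (Q ^ k) x y) ∧ (∀ x, ∑ y, (Q ^ k) x y = 1) := by
  intro k
  induction k with
  | zero =>
    refine ⟨fun x y => ?_, fun x => ?_⟩
    · rw [pow_zero]; by_cases h : x = y <;> simp [Matrix.one_apply, h]
    · rw [pow_zero]; simp [Matrix.one_apply]
  | succ n ih =>
    refine ⟨fun x y => ?_, fun x => ?_⟩
    · rw [pow_succ, Matrix.mul_apply]
      exact Finset.sum_nonneg fun z _ => mul_nonneg (ih.1 x z) (h0 z y)
    · simp only [pow_succ, Matrix.mul_apply]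
      rw [Finset.sum_comm]
      have hz : ∀ z, ∑ y, (Q ^ n) x z * Q z y = (Q ^ n) x z := by
        intro z; rw [← Finset.mul_sum, h1 z, mul_one]
      simp only [hz]; exact ih.2 x

lemma pow_entry_summable (Q : Matrix X X ℝ) (h0 : ∀ x y, 0 ≤ Q x y)
    (h1 : ∀ x, ∑ y, Q x y = 1) {α : ℝ} (hα0 : 0 ≤ α) (hα1 : α < 1) (x y : X) :
    Summable fun k : ℕ => ((α • Q) ^ k) x y := by
  have hb : ∀ k : ℕ, ((α • Q) ^ k) x y = α ^ k * (Q ^ k) x y := by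
    intro k; rw [smul_pow]; simp [Matrix.smul_apply]
  apply Summable.of_nonneg_of_le (fun k => by
      rw [hb]; exact mul_nonneg (pow_nonneg hα0 k) ((stoch_pow Q h0 h1 k).1 x y))
    (fun k => ?_) (summable_geometric_of_lt_one hα0 hα1)
  rw [hb]
  have hle : (Q ^ k) x y ≤ 1 := by
    calc (Q ^ k) x y ≤ ∑ z, (Q ^ k) x z :=
      Finset.single_le_sum (fun z _ => (stoch_pow Q h0 h1 k).1 x z) (Finset.mem_univ y)
    _ = 1 := (stoch_pow Q h0 h1 k).2 x
  calc α ^ k * (Q ^ k) x y ≤ α ^ k * 1 :=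
        mul_le_mul_of_nonneg_left hle (pow_nonneg hα0 k)
  _ = α ^ k := mul_one _

lemma tsum_matrix_apply (f : ℕ → Matrix X X ℝ) (hf : ∀ x y, Summable fun k => f k x y)
    (x y : X) : (∑' k, f k) x y = ∑' k, f k x y := by
  have h1 : Summable f := by
    rw [show Summable f ↔ _ from Pi.summable]
    intro i
    rw [show _ ↔ _ from Pi.summable]
    intro j; exact hf i j
  have h1' : Summable (fun k => (show X → X → ℝ from f k)) := h1
  have h2 : (∑' k, (show X → X → ℝ from f k)) x y = ∑' k, f k x y := by
    rw [tsum_apply h1', tsum_apply ((Pi.summable).mp h1' x)]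
  exact h2

lemma nonneg_of_subinvariant [Nonempty X] (Q : Matrix X X ℝ) (h0 : ∀ x y, 0 ≤ Q x y)
    (h1 : ∀ x, ∑ y, Q x y = 1) {α : ℝ} (hα0 : 0 ≤ α) (hα1 : α < 1) (w : X → ℝ)
    (hw : ∀ x, α * ∑ y, Q x y * w y ≤ w x) : ∀ x, 0 ≤ w x := by
  obtain ⟨x0, -, hx0⟩ := Finset.exists_mem_eq_inf' Finset.univ_nonempty w
  have hmin : ∀ y, w x0 ≤ w y := fun y => hx0 ▸ Finset.inf'_le _ (Finset.mem_univ y)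
  have h2 : α * w x0 ≤ w x0 := by
    calc α * w x0 = α * ∑ y, Q x0 y * w x0 := by
          rw [← Finset.sum_mul, h1 x0, one_mul]
    _ ≤ α * ∑ y, Q x0 y * w y := by
          apply mul_le_mul_of_nonneg_left _ hα0
          exact Finset.sum_le_sum fun y _ => mul_le_mul_of_nonneg_left (hmin y) (h0 x0 y)
    _ ≤ w x0 := hw x0
  have h3 : 0 ≤ w x0 := by nlinarith
  exact fun x => le_trans h3 (hmin x)

lemma delta_succ (Q : Matrix X X ℝ) {α : ℝ}
    (hs : ∀ x y, Summable fun k : ℕ => ((α • Q) ^ k) x y) :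
    (∑' k : ℕ, (α • Q) ^ k) = 1 + (α • Q) * ∑' k : ℕ, (α • Q) ^ k := by
  have happ : ∀ x y, (∑' k : ℕ, (α • Q) ^ k) x y = ∑' k : ℕ, ((α • Q) ^ k) x y := by
    intro x y
    exact tsum_matrix_apply _ hs x y
  ext x y
  rw [Matrix.add_apply, Matrix.mul_apply, happ x y]
  calc ∑' k : ℕ, ((α • Q) ^ k) x y
      = ((α • Q) ^ 0) x y + ∑' k : ℕ, ((α • Q) ^ (k + 1)) x y := Summable.tsum_eq_zero_add (hs x y)
  _ = (1 : Matrix X X ℝ) x y + ∑ z, (α • Q) x z * (∑' k : ℕ, (α • Q) ^ k) z y := by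
      rw [pow_zero]
      congr 1
      calc ∑' k : ℕ, ((α • Q) ^ (k + 1)) x y
          = ∑' k : ℕ, ∑ z, (α • Q) x z * ((α • Q) ^ k) z y := by
            refine tsum_congr fun k => ?_
            rw [pow_succ', Matrix.mul_apply]
      _ = ∑ z, ∑' k : ℕ, (α • Q) x z * ((α • Q) ^ k) z y :=
            Summable.tsum_finsetSum fun z _ => (hs z y).mul_left _
      _ = ∑ z, (α • Q) x z * (∑' k : ℕ, (α • Q) ^ k) z y := by
            refine Finset.sum_congr rfl fun z _ => ?_
            rw [tsum_mul_left, happ z y]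

end SALPHelpers

/-- Theorem 2: if r_SALP is optimal for the SALP in penalized form, then
‖J* - Φ r_SALP‖_{1,ν} ≤ inf_{r,ψ∈Ψ} ‖J* - Φr‖_{∞,1/ψ}
  (ν^⊤ψ + 2(π_{μ*,ν}^⊤ψ + 1)(αβ(ψ) + 1)/(1-α)). -/
theorem salp_strong_approximation_guarantee
    {X A : Type*} [Fintype X] [Nonempty X] [Fintype A] [Nonempty A] [DecidableEq X] {K : ℕ}
    (g : X → A → ℝ) (P : A → X → X → ℝ) (α : ℝ)
    (hα0 : 0 < α) (hα1 : α < 1)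
    (hP0 : ∀ a x x', 0 ≤ P a x x') (hP1 : ∀ a x, ∑ x', P a x x' = 1)
    (Jstar : X → ℝ) (hJstar : bellmanT g P α Jstar = Jstar)
    (μs : X → A) (hμs : polT g P α μs Jstar = bellmanT g P α Jstar)
    (ν : X → ℝ) (hν0 : ∀ x, 0 ≤ ν x) (hν1 : ∑ x, ν x = 1)
    (Φ : X → Fin K → ℝ)
    (hone : ∃ r1 : Fin K → ℝ, ∀ x, phiR Φ r1 x = 1)
    -- (r_SALP, s̄) is an optimal solution of the penalized SALP (4.3):
    (rSALP : Fin K → ℝ) (sbar : X → ℝ)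
    (hfeas : (∀ x, phiR Φ rSALP x ≤ bellmanT g P α (phiR Φ rSALP) x + sbar x) ∧
      (∀ x, 0 ≤ sbar x))
    (hopt : ∀ (r : Fin K → ℝ) (s : X → ℝ),
      (∀ x, phiR Φ r x ≤ bellmanT g P α (phiR Φ r) x + s x) → (∀ x, 0 ≤ s x) →
      ∑ x, ν x * phiR Φ r x - 2 * (∑ x, piDist P α μs ν x * s x) / (1 - α) ≤
      ∑ x, ν x * phiR Φ rSALP x - 2 * (∑ x, piDist P α μs ν x * sbar x) / (1 - α)) :
    wnorm1 ν (fun x => Jstar x - phiR Φ rSALP x) ≤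
      sInf {v | ∃ (r : Fin K → ℝ) (ψ : X → ℝ), (∀ x, 1 ≤ ψ x) ∧
        v = wsupNorm ψ (fun x => Jstar x - phiR Φ r x) *
          (∑ x, ν x * ψ x +
            2 * ((∑ x, piDist P α μs ν x * ψ x) + 1) * (α * betaPsi P ψ + 1) / (1 - α))} := by
  have hα0' : (0:ℝ) ≤ α := hα0.le
  have h1α : (0:ℝ) < 1 - α := by linarith
  set Q : Matrix X X ℝ := polMat P μs with hQdef
  have hQP : ∀ x y, Q x y = P (μs x) x y := fun _ _ => rfl
  have hQ0 : ∀ x y, 0 ≤ Q x y := fun x y => hP0 _ _ _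
  have hQ1 : ∀ x, ∑ y, Q x y = 1 := fun x => hP1 _ _
  have hs : ∀ x y, Summable fun k : ℕ => ((α • Q) ^ k) x y :=
    pow_entry_summable Q hQ0 hQ1 hα0' hα1
  have hDapp : ∀ x y, deltaMat P α μs x y = ∑' k : ℕ, ((α • Q) ^ k) x y := by
    intro x y
    exact tsum_matrix_apply _ hs x y
  have hentry0 : ∀ (k : ℕ) (x y : X), 0 ≤ ((α • Q) ^ k) x y := by
    intro k x y
    rw [smul_pow]
    show 0 ≤ α ^ k * (Q ^ k) x y
    exact mul_nonneg (pow_nonneg hα0' k) ((stoch_pow Q hQ0 hQ1 k).1 x y)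
  have hD0 : ∀ x y, 0 ≤ deltaMat P α μs x y := by
    intro x y; rw [hDapp]; exact tsum_nonneg fun k => hentry0 k x y
  have hπ0 : ∀ y, 0 ≤ piDist P α μs ν y := by
    intro y
    show 0 ≤ (1 - α) * ∑ x0, ν x0 * deltaMat P α μs x0 y
    exact mul_nonneg h1α.le
      (Finset.sum_nonneg fun x _ => mul_nonneg (hν0 x) (hD0 x y))
  set v : X → ℝ := fun x => ∑ y, deltaMat P α μs x y * sbar y with hvdef
  have hvz : ∀ z, v z = ∑ y, deltaMat P α μs z y * sbar y := fun z => rfl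
  have hv0 : ∀ x, 0 ≤ v x := fun x =>
    Finset.sum_nonneg fun y _ => mul_nonneg (hD0 x y) (hfeas.2 y)
  have hDrec : deltaMat P α μs = 1 + (α • Q) * deltaMat P α μs := delta_succ Q hs
  have hvrec : ∀ x, v x = sbar x + α * ∑ y, Q x y * v y := by
    intro x
    have hx : ∀ y, deltaMat P α μs x y
        = (1 : Matrix X X ℝ) x y + ∑ z, α * Q x z * deltaMat P α μs z y := by
      intro y
      conv_lhs => rw [hDrec]
      rw [Matrix.add_apply, Matrix.mul_apply]
      rfl
    calc v x = ∑ y, ((1 : Matrix X X ℝ) x y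
          + ∑ z, α * Q x z * deltaMat P α μs z y) * sbar y := by
          rw [hvz]
          exact Finset.sum_congr rfl fun y _ => by rw [← hx y]
    _ = ∑ y, (1 : Matrix X X ℝ) x y * sbar y
        + ∑ y, (∑ z, α * Q x z * deltaMat P α μs z y) * sbar y := by
          rw [← Finset.sum_add_distrib]
          exact Finset.sum_congr rfl fun y _ => by ring
    _ = sbar x + α * ∑ y, Q x y * v y := by
          congr 1
          · simp [Matrix.one_apply]
          · calc ∑ y, (∑ z, α * Q x z * deltaMat P α μs z y) * sbar y
                = ∑ y, ∑ z, α * Q x z * deltaMat P α μs z y * sbar y := by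
                  exact Finset.sum_congr rfl fun y _ => by rw [Finset.sum_mul]
            _ = ∑ z, ∑ y, α * Q x z * deltaMat P α μs z y * sbar y := Finset.sum_comm
            _ = ∑ z, α * Q x z * ∑ y, deltaMat P α μs z y * sbar y := by
                  refine Finset.sum_congr rfl fun z _ => ?_
                  rw [Finset.mul_sum]
                  exact Finset.sum_congr rfl fun y _ => by ring
            _ = α * ∑ z, Q x z * v z := by
                  rw [Finset.mul_sum]
                  refine Finset.sum_congr rfl fun z _ => ?_
                  rw [hvz z]; ring
  have hTle : ∀ (J : X → ℝ) (x : X),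
      bellmanT g P α J x ≤ g x (μs x) + α * ∑ y, P (μs x) x y * J y :=
    fun J x => Finset.inf'_le _ (Finset.mem_univ (μs x))
  have hJfix : ∀ x, g x (μs x) + α * ∑ y, P (μs x) x y * Jstar y = Jstar x :=
    fun x => congrFun (hμs.trans hJstar) x
  have hu_le : ∀ x, phiR Φ rSALP x - Jstar x
      ≤ α * ∑ y, Q x y * (phiR Φ rSALP y - Jstar y) + sbar x := by
    intro x
    have h1 := hfeas.1 x
    have h2 := hTle (phiR Φ rSALP) x
    have h3 := hJfix x
    have h4 : ∑ y, P (μs x) x y * phiR Φ rSALP y - ∑ y, P (μs x) x y * Jstar y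
        = ∑ y, Q x y * (phiR Φ rSALP y - Jstar y) := by
      rw [← Finset.sum_sub_distrib]
      refine Finset.sum_congr rfl fun y _ => ?_
      rw [hQP]; ring
    have h5 : α * ∑ y, Q x y * (phiR Φ rSALP y - Jstar y)
        = α * ∑ y, P (μs x) x y * phiR Φ rSALP y
          - α * ∑ y, P (μs x) x y * Jstar y := by
      rw [← h4]; ring
    linarith
  have huv : ∀ x, phiR Φ rSALP x - Jstar x ≤ v x := by
    have hmain := nonneg_of_subinvariant Q hQ0 hQ1 hα0' hα1
      (fun x => v x - (phiR Φ rSALP x - Jstar x)) ?_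
    · intro x; linarith [hmain x]
    · intro x
      show α * ∑ y, Q x y * (v y - (phiR Φ rSALP y - Jstar y)) ≤ v x - (phiR Φ rSALP x - Jstar x)
      have he : ∑ y, Q x y * (v y - (phiR Φ rSALP y - Jstar y))
          = ∑ y, Q x y * v y - ∑ y, Q x y * (phiR Φ rSALP y - Jstar y) := by
        rw [← Finset.sum_sub_distrib]
        exact Finset.sum_congr rfl fun y _ => by ring
      rw [he, mul_sub]
      linarith [hvrec x, hu_le x]
  have hsum_v : ∑ x, ν x * v x = (∑ y, piDist P α μs ν y * sbar y) / (1 - α) := by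
    have heq : ∑ y, piDist P α μs ν y * sbar y = (1 - α) * ∑ x, ν x * v x := by
      show ∑ y, ((1 - α) * ∑ x0, ν x0 * deltaMat P α μs x0 y) * sbar y = _
      calc ∑ y, ((1 - α) * ∑ x0, ν x0 * deltaMat P α μs x0 y) * sbar y
          = ∑ y, (1 - α) * ∑ x0, ν x0 * deltaMat P α μs x0 y * sbar y := by
            refine Finset.sum_congr rfl fun y _ => ?_
            rw [mul_assoc, Finset.sum_mul]
      _ = (1 - α) * ∑ y, ∑ x0, ν x0 * deltaMat P α μs x0 y * sbar y := by
            rw [← Finset.mul_sum]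
      _ = (1 - α) * ∑ x0, ∑ y, ν x0 * deltaMat P α μs x0 y * sbar y := by
            rw [Finset.sum_comm]
      _ = (1 - α) * ∑ x, ν x * v x := by
            congr 1
            refine Finset.sum_congr rfl fun x _ => ?_
            rw [hvz x, Finset.mul_sum]
            exact Finset.sum_congr rfl fun y _ => by ring
    rw [heq]
    field_simp
  have hkey1 : wnorm1 ν (fun x => Jstar x - phiR Φ rSALP x)
      ≤ ∑ x, ν x * (Jstar x - phiR Φ rSALP x)
        + 2 * (∑ x, piDist P α μs ν x * sbar x) / (1 - α) := by
    have hpt : ∀ x, ν x * |Jstar x - phiR Φ rSALP x|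
        ≤ ν x * (Jstar x - phiR Φ rSALP x) + 2 * (ν x * v x) := by
      intro x
      have h1 := huv x
      have h2 := hv0 x
      have habs : |Jstar x - phiR Φ rSALP x|
          ≤ (Jstar x - phiR Φ rSALP x) + 2 * v x := by
        rcases abs_cases (Jstar x - phiR Φ rSALP x) with ⟨h, _⟩ | ⟨h, _⟩ <;> linarith
      calc ν x * |Jstar x - phiR Φ rSALP x|
          ≤ ν x * ((Jstar x - phiR Φ rSALP x) + 2 * v x) :=
            mul_le_mul_of_nonneg_left habs (hν0 x)
      _ = ν x * (Jstar x - phiR Φ rSALP x) + 2 * (ν x * v x) := by ring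
    calc wnorm1 ν (fun x => Jstar x - phiR Φ rSALP x)
        = ∑ x, ν x * |Jstar x - phiR Φ rSALP x| := rfl
    _ ≤ ∑ x, (ν x * (Jstar x - phiR Φ rSALP x) + 2 * (ν x * v x)) :=
        Finset.sum_le_sum fun x _ => hpt x
    _ = ∑ x, ν x * (Jstar x - phiR Φ rSALP x) + 2 * ∑ x, ν x * v x := by
        rw [Finset.sum_add_distrib, ← Finset.mul_sum]
    _ = ∑ x, ν x * (Jstar x - phiR Φ rSALP x)
        + 2 * (∑ x, piDist P α μs ν x * sbar x) / (1 - α) := by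
        rw [hsum_v]; ring
  refine le_csInf ⟨_, ⟨rSALP, fun _ => (1:ℝ), fun _ => le_refl 1, rfl⟩⟩ ?_
  rintro w ⟨r, ψ, hψ, rfl⟩
  have hψpos : ∀ x, (0:ℝ) < ψ x := fun x => lt_of_lt_of_le one_pos (hψ x)
  set εv := wsupNorm ψ (fun x => Jstar x - phiR Φ r x) with hεv
  have habs : ∀ x, |Jstar x - phiR Φ r x| ≤ εv * ψ x := by
    intro x
    rw [hεv]
    have h := Finset.le_sup' (fun y => |Jstar y - phiR Φ r y| / ψ y) (Finset.mem_univ x)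
    exact (div_le_iff₀ (hψpos x)).mp h
  have hε0 : (0:ℝ) ≤ εv := by
    rw [hεv]
    have x₁ : X := Classical.arbitrary X
    refine le_trans (div_nonneg (abs_nonneg (Jstar x₁ - phiR Φ r x₁)) (hψpos x₁).le) ?_
    exact Finset.le_sup' (fun y => |Jstar y - phiR Φ r y| / ψ y) (Finset.mem_univ x₁)
  have hβle : ∀ x a, ∑ y, P a x y * ψ y ≤ betaPsi P ψ * ψ x := by
    intro x a
    have h := Finset.le_sup' (fun p : X × A => (∑ x', P p.2 p.1 x' * ψ x') / ψ p.1)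
      (Finset.mem_univ (x, a))
    exact (div_le_iff₀ (hψpos x)).mp h
  have hβ0 : (0:ℝ) ≤ betaPsi P ψ := by
    have x₁ : X := Classical.arbitrary X
    have a₁ : A := Classical.arbitrary A
    refine le_trans ?_ (Finset.le_sup' (fun p : X × A => (∑ x', P p.2 p.1 x' * ψ x') / ψ p.1)
      (Finset.mem_univ (x₁, a₁)))
    exact div_nonneg (Finset.sum_nonneg fun y _ =>
      mul_nonneg (hP0 _ _ _) (hψpos y).le) (hψpos x₁).le
  have hβ1 : (0:ℝ) ≤ α * betaPsi P ψ + 1 := by nlinarith [mul_nonneg hα0' hβ0]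
  have hTb : ∀ x, bellmanT g P α Jstar x - bellmanT g P α (phiR Φ r) x
      ≤ α * (betaPsi P ψ * (εv * ψ x)) := by
    intro x
    obtain ⟨a0, -, ha0⟩ := Finset.exists_mem_eq_inf' Finset.univ_nonempty
      (fun a => g x a + α * ∑ y, P a x y * phiR Φ r y)
    have h1 : bellmanT g P α (phiR Φ r) x = g x a0 + α * ∑ y, P a0 x y * phiR Φ r y := ha0
    have h2 : bellmanT g P α Jstar x ≤ g x a0 + α * ∑ y, P a0 x y * Jstar y :=
      Finset.inf'_le _ (Finset.mem_univ a0)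
    have h3 : ∑ y, P a0 x y * Jstar y - ∑ y, P a0 x y * phiR Φ r y
        ≤ εv * ∑ y, P a0 x y * ψ y := by
      rw [← Finset.sum_sub_distrib, Finset.mul_sum]
      refine Finset.sum_le_sum fun y _ => ?_
      have he : P a0 x y * Jstar y - P a0 x y * phiR Φ r y
          = P a0 x y * (Jstar y - phiR Φ r y) := by ring
      rw [he]
      calc P a0 x y * (Jstar y - phiR Φ r y) ≤ P a0 x y * (εv * ψ y) :=
            mul_le_mul_of_nonneg_left
              (le_trans (le_abs_self _) (habs y)) (hP0 a0 x y)
      _ = εv * (P a0 x y * ψ y) := by ring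
    have h4 : εv * ∑ y, P a0 x y * ψ y ≤ εv * (betaPsi P ψ * ψ x) :=
      mul_le_mul_of_nonneg_left (hβle x a0) hε0
    calc bellmanT g P α Jstar x - bellmanT g P α (phiR Φ r) x
        ≤ α * (∑ y, P a0 x y * Jstar y - ∑ y, P a0 x y * phiR Φ r y) := by
          rw [h1, mul_sub]; linarith
    _ ≤ α * (εv * ∑ y, P a0 x y * ψ y) := mul_le_mul_of_nonneg_left h3 hα0'
    _ ≤ α * (εv * (betaPsi P ψ * ψ x)) := mul_le_mul_of_nonneg_left h4 hα0'
    _ = α * (betaPsi P ψ * (εv * ψ x)) := by ring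
  set s' : X → ℝ := fun x => max (phiR Φ r x - bellmanT g P α (phiR Φ r) x) 0 with hs'def
  have hs'0 : ∀ x, 0 ≤ s' x := fun x => le_max_right _ _
  have hs'feas : ∀ x, phiR Φ r x ≤ bellmanT g P α (phiR Φ r) x + s' x := by
    intro x
    have h : phiR Φ r x - bellmanT g P α (phiR Φ r) x ≤ s' x := le_max_left _ _
    linarith
  have hs'le : ∀ x, s' x ≤ εv * ((α * betaPsi P ψ + 1) * ψ x) := by
    intro x
    have hJT : bellmanT g P α Jstar x = Jstar x := congrFun hJstar x
    apply max_le
    · have h1 : phiR Φ r x - Jstar x ≤ εv * ψ x := by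
        calc phiR Φ r x - Jstar x ≤ |phiR Φ r x - Jstar x| := le_abs_self _
        _ = |Jstar x - phiR Φ r x| := abs_sub_comm _ _
        _ ≤ εv * ψ x := habs x
      have h2 := hTb x
      have he : εv * ((α * betaPsi P ψ + 1) * ψ x)
          = εv * ψ x + α * (betaPsi P ψ * (εv * ψ x)) := by ring
      rw [he]
      linarith
    · exact mul_nonneg hε0 (mul_nonneg hβ1 (hψpos x).le)
  have hoptr := hopt r s' hs'feas hs'0
  have hνb : ∑ x, ν x * (Jstar x - phiR Φ r x) ≤ εv * ∑ x, ν x * ψ x := by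
    rw [Finset.mul_sum]
    refine Finset.sum_le_sum fun x _ => ?_
    calc ν x * (Jstar x - phiR Φ r x) ≤ ν x * (εv * ψ x) :=
        mul_le_mul_of_nonneg_left (le_trans (le_abs_self _) (habs x)) (hν0 x)
    _ = εv * (ν x * ψ x) := by ring
  have hπs' : ∑ x, piDist P α μs ν x * s' x
      ≤ εv * (α * betaPsi P ψ + 1) * ∑ x, piDist P α μs ν x * ψ x := by
    rw [Finset.mul_sum]
    refine Finset.sum_le_sum fun x _ => ?_
    calc piDist P α μs ν x * s' x
        ≤ piDist P α μs ν x * (εv * ((α * betaPsi P ψ + 1) * ψ x)) :=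
          mul_le_mul_of_nonneg_left (hs'le x) (hπ0 x)
    _ = εv * (α * betaPsi P ψ + 1) * (piDist P α μs ν x * ψ x) := by ring
  have hπψ0 : (0:ℝ) ≤ ∑ x, piDist P α μs ν x * ψ x :=
    Finset.sum_nonneg fun x _ => mul_nonneg (hπ0 x) (hψpos x).le
  have hsplit : ∑ x, ν x * (Jstar x - phiR Φ rSALP x)
      = ∑ x, ν x * Jstar x - ∑ x, ν x * phiR Φ rSALP x := by
    rw [← Finset.sum_sub_distrib]
    exact Finset.sum_congr rfl fun x _ => by ring
  have hsplit2 : ∑ x, ν x * (Jstar x - phiR Φ r x)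
      = ∑ x, ν x * Jstar x - ∑ x, ν x * phiR Φ r x := by
    rw [← Finset.sum_sub_distrib]
    exact Finset.sum_congr rfl fun x _ => by ring
  have h2div : 2 * (∑ x, piDist P α μs ν x * s' x) / (1 - α)
      ≤ 2 * (εv * (α * betaPsi P ψ + 1) * ∑ x, piDist P α μs ν x * ψ x) / (1 - α) :=
    (div_le_div_iff_of_pos_right h1α).mpr (by linarith)
  have hstep : wnorm1 ν (fun x => Jstar x - phiR Φ rSALP x)
      ≤ εv * ∑ x, ν x * ψ x
        + 2 * (εv * (α * betaPsi P ψ + 1) * ∑ x, piDist P α μs ν x * ψ x) / (1 - α) := by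
    calc wnorm1 ν (fun x => Jstar x - phiR Φ rSALP x)
        ≤ ∑ x, ν x * (Jstar x - phiR Φ rSALP x)
          + 2 * (∑ x, piDist P α μs ν x * sbar x) / (1 - α) := hkey1
    _ = ∑ x, ν x * Jstar x - (∑ x, ν x * phiR Φ rSALP x
          - 2 * (∑ x, piDist P α μs ν x * sbar x) / (1 - α)) := by
        rw [hsplit]; ring
    _ ≤ ∑ x, ν x * Jstar x - (∑ x, ν x * phiR Φ r x
          - 2 * (∑ x, piDist P α μs ν x * s' x) / (1 - α)) := by
        linarith
    _ = ∑ x, ν x * (Jstar x - phiR Φ r x)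
          + 2 * (∑ x, piDist P α μs ν x * s' x) / (1 - α) := by
        rw [hsplit2]; ring
    _ ≤ εv * ∑ x, ν x * ψ x
          + 2 * (εv * (α * betaPsi P ψ + 1) * ∑ x, piDist P α μs ν x * ψ x) / (1 - α) := by
        linarith
  have hgap : 2 * (εv * (α * betaPsi P ψ + 1) * ∑ x, piDist P α μs ν x * ψ x)
      ≤ εv * (2 * ((∑ x, piDist P α μs ν x * ψ x) + 1) * (α * betaPsi P ψ + 1)) := by
    nlinarith [mul_nonneg hε0 hβ1]
  have hexp : εv * (∑ x, ν x * ψ x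
      + 2 * ((∑ x, piDist P α μs ν x * ψ x) + 1) * (α * betaPsi P ψ + 1) / (1 - α))
      = εv * ∑ x, ν x * ψ x
        + εv * (2 * ((∑ x, piDist P α μs ν x * ψ x) + 1) * (α * betaPsi P ψ + 1)) / (1 - α) := by
    ring
  have hlast := (div_le_div_iff_of_pos_right h1α).mpr hgap
  rw [hexp]
  linarith
end
end
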